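/- For any r ∈ ℤ, M ∈ ℕ, α_j ∈ ℕ, h, k coprime integers with k ≥ 1, and z ∈ ℂ with Re(z) > 0, the theta function satisfies θ(r, 2M; 2α_j(h/k + iz/k)) = (e^{πi α_j h r²/(Mk)} / (2√(Mk α_j z))) · Σ_{ν∈ℤ} e^{-πν²/(4Mk α_j z) + πi r ν/(Mk)} G(2M α_j h, 2r α_j h + ν; k), where the square root is the principal branch. -/

import Mathlib

open Complex Real

/-- The theta function `θ(r, M; τ) := Σ_{ν ≡ r (mod M)} e^{2πiτ ν²/(2M)}`. -/
noncomputable def thetaFn (r M : ℕ) (τ : ℂ) : ℂ :=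
  ∑' ν : ℤ, if (ν : ZMod M) = (r : ZMod M) then
    Complex.exp (2 * (Real.pi : ℂ) * Complex.I * τ * (ν : ℂ) ^ 2 / (2 * M)) else 0

/-- The Gauss sum `G(a, b; c) := Σ_{ℓ mod c} e^{2πi(aℓ² + bℓ)/c}`. -/
noncomputable def gaussSum' (a b c : ℤ) : ℂ :=
  ∑ ℓ ∈ Finset.range c.toNat,
    Complex.exp (2 * (Real.pi : ℂ) * Complex.I * ((a : ℂ) * (ℓ : ℂ) ^ 2 + (b : ℂ) * ℓ) / (c : ℂ))

/-- term of the theta series, as a function of the integer index -/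
noncomputable def thTerm (M αj : ℕ) (h k : ℤ) (z : ℂ) (ν : ℤ) : ℂ :=
  Complex.exp ((Real.pi:ℂ) * Complex.I * αj * h * (ν:ℂ)^2 / ((M:ℂ)*k))
    * Complex.exp (-(Real.pi:ℂ) * αj * z * (ν:ℂ)^2 / ((M:ℂ)*k))


lemma sqrt_four_mul {w : ℂ} (hw : 0 < w.re) :
    ((4 * w)⁻¹) ^ (1/2 : ℂ) = 1 / (2 * w ^ (1/2 : ℂ)) := by
  have hw0 : w ≠ 0 := by intro hh; rw [hh] at hw; simp at hw
  have h4w0 : (4:ℂ) * w ≠ 0 := by simp [hw0]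
  have harg : (4 * w).arg ≠ Real.pi := by
    intro hh
    have h2 := (Complex.arg_eq_pi_iff.mp hh).1
    have : ((4:ℂ) * w).re = 4 * w.re := by simp [Complex.mul_re]
    rw [this] at h2; linarith
  rw [Complex.inv_cpow _ _ harg]
  have hkey : ((4:ℂ)*w) ^ (1/2:ℂ) = 2 * w^(1/2:ℂ) := by
    rw [Complex.cpow_def_of_ne_zero h4w0, Complex.cpow_def_of_ne_zero hw0]
    have hlog : Complex.log (4*w) = (Real.log 4 : ℂ) + Complex.log w := by
      have := Complex.log_ofReal_mul (show (0:ℝ) < 4 by norm_num) hw0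
      rw [show (((4:ℝ)):ℂ) = (4:ℂ) by norm_num] at this
      exact this
    rw [hlog, add_mul, Complex.exp_add]
    congr 1
    have h24 : (Real.log 4 : ℂ) * (1/2) = ((Real.log 2 : ℝ) : ℂ) := by
      rw [show (4:ℝ) = 2^2 by norm_num, Real.log_pow]
      push_cast; ring
    rw [h24, ← Complex.ofReal_exp, Real.exp_log two_pos]
    norm_num
  rw [hkey]; exact (one_div _).symm

lemma poisson_aux {A : ℂ} (hA : 0 < A.re) (c : ℝ) :
    ∑' n : ℤ, Complex.exp (-(π:ℂ) * A * ((n:ℂ) + c)^2)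
      = (A⁻¹) ^ (1/2 : ℂ)
        * ∑' n : ℤ, Complex.exp (-(π:ℂ) * A⁻¹ * (n:ℂ)^2 + 2*π*Complex.I*c*n) := by
  have hA0 : A ≠ 0 := by intro hh; rw [hh] at hA; simp at hA
  have hAi : 0 < (A⁻¹).re := by
    rw [Complex.inv_re]
    exact div_pos hA (Complex.normSq_pos.mpr hA0)
  have hAi0 : A⁻¹ ≠ 0 := inv_ne_zero hA0
  have hpow : (A⁻¹) ^ (1/2 : ℂ) ≠ 0 := by
    simp [Complex.cpow_eq_zero_iff, hAi0]
  have key := Complex.tsum_exp_neg_quadratic hAi (-Complex.I * c)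
  have hic : Complex.I * (-Complex.I * (c:ℂ)) = (c:ℂ) := by
    rw [show Complex.I * (-Complex.I * (c:ℂ)) = -(Complex.I*Complex.I)*(c:ℂ) from by ring,
      Complex.I_mul_I]
    ring
  have key2 : (∑' n : ℤ, Complex.exp (-(π:ℂ) * A⁻¹ * (n:ℂ)^2 + 2*π*(-Complex.I*(c:ℂ))*(n:ℂ)))
      = 1 / (A⁻¹) ^ (1/2:ℂ) * ∑' n : ℤ, Complex.exp (-(π:ℂ) * A * ((n:ℂ)+c)^2) := by
    rw [key]
    congr 1
    refine tsum_congr fun n => ?_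
    rw [hic, div_eq_mul_inv, inv_inv]
  have key3 : (∑' n : ℤ, Complex.exp (-(π:ℂ) * A * ((n:ℂ)+c)^2))
      = (A⁻¹) ^ (1/2:ℂ)
        * ∑' n : ℤ, Complex.exp (-(π:ℂ) * A⁻¹ * (n:ℂ)^2 + 2*π*(-Complex.I*(c:ℂ))*(n:ℂ)) := by
    rw [key2, ← mul_assoc, mul_one_div_cancel hpow, one_mul]
  rw [key3]
  congr 1
  calc ∑' n : ℤ, Complex.exp (-(π:ℂ) * A⁻¹ * (n:ℂ)^2 + 2*π*(-Complex.I*(c:ℂ))*(n:ℂ))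
      = ∑' n : ℤ, Complex.exp (-(π:ℂ) * A⁻¹ * ((-n:ℤ):ℂ)^2 + 2*π*Complex.I*(c:ℂ)*((-n:ℤ):ℂ)) := by
        refine tsum_congr fun n => ?_
        congr 1
        push_cast
        ring
    _ = ∑' n : ℤ, Complex.exp (-(π:ℂ) * A⁻¹ * ((n:ℤ):ℂ)^2 + 2*π*Complex.I*(c:ℂ)*((n:ℤ):ℂ)) := by
        have h := (Equiv.neg ℤ).tsum_eq
          (fun n : ℤ => Complex.exp (-(π:ℂ) * A⁻¹ * ((n:ℤ):ℂ)^2 + 2*π*Complex.I*(c:ℂ)*((n:ℤ):ℂ)))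
        simp only [Equiv.neg_apply] at h
        exact h

lemma inv_re_pos {A : ℂ} (hA : 0 < A.re) : 0 < (A⁻¹).re := by
  have hA0 : A ≠ 0 := by intro hh; rw [hh] at hA; simp at hA
  rw [Complex.inv_re]
  exact div_pos hA (Complex.normSq_pos.mpr hA0)

lemma wre_pos (M αj : ℕ) (hM : 0 < M) (hαj : 0 < αj) (k : ℤ) (hk : 1 ≤ k)
    (z : ℂ) (hz : 0 < z.re) : 0 < ((M:ℂ)*k*αj*z).re := by
  have hco : ((M:ℂ)*k*αj*z) = (((M:ℝ)*(k:ℝ)*(αj:ℝ) : ℝ):ℂ) * z := by push_cast; ring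
  rw [hco, Complex.re_ofReal_mul]
  have h1 : (0:ℝ) < (M:ℝ) := by exact_mod_cast hM
  have h2 : (0:ℝ) < (k:ℝ) := by exact_mod_cast hk
  have h3 : (0:ℝ) < (αj:ℝ) := by exact_mod_cast hαj
  exact mul_pos (by positivity) hz

lemma thTerm_summable (M αj : ℕ) (hM : 0 < M) (hαj : 0 < αj) (h k : ℤ) (hk : 1 ≤ k)
    (z : ℂ) (hz : 0 < z.re) : Summable (thTerm M αj h k z) := by
  set c : ℝ := (αj:ℝ)/((M:ℝ)*(k:ℝ)) with hc
  have hcpos : 0 < c := by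
    have h1 : (0:ℝ) < (M:ℝ) := by exact_mod_cast hM
    have h2 : (0:ℝ) < (k:ℝ) := by exact_mod_cast hk
    have h3 : (0:ℝ) < (αj:ℝ) := by exact_mod_cast hαj
    positivity
  set τ₀ : ℂ := (c:ℂ) * ((h:ℂ) + Complex.I * z) with hτ
  have him : 0 < τ₀.im := by
    rw [hτ]
    simp only [Complex.mul_im, Complex.ofReal_re, Complex.ofReal_im, Complex.add_im,
      Complex.add_re, Complex.intCast_im, Complex.mul_im, Complex.mul_re, Complex.I_re,
      Complex.I_im]
    simp
    exact mul_pos hcpos hz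
  refine ((summable_jacobiTheta₂_term_iff 0 τ₀).mpr him).congr fun ν => ?_
  rw [jacobiTheta₂_term, thTerm, ← Complex.exp_add]
  congr 1
  have hM0 : (M:ℂ) ≠ 0 := Nat.cast_ne_zero.mpr hM.ne'
  have hk0 : (k:ℂ) ≠ 0 := Int.cast_ne_zero.mpr (by omega)
  have e1 : 2*(π:ℂ)*Complex.I*ν*0 + (π:ℂ)*Complex.I*(ν:ℂ)^2*τ₀
      = (π:ℂ)*Complex.I*αj*h*(ν:ℂ)^2/((M:ℂ)*k)
        + -(π:ℂ)*αj*z*(ν:ℂ)^2/((M:ℂ)*k) := by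
    rw [hτ, hc]
    push_cast
    field_simp
    linear_combination ((ν:ℂ)^2*(αj:ℂ)*z) * Complex.I_sq
  rw [e1]

lemma gauss_summable (M αj : ℕ) (hM : 0 < M) (hαj : 0 < αj) (k : ℤ) (hk : 1 ≤ k)
    (z : ℂ) (hz : 0 < z.re) (cc : ℝ) :
    Summable (fun ν : ℤ => Complex.exp (-(Real.pi:ℂ)*(4*((M:ℂ)*k*αj*z))⁻¹*(ν:ℂ)^2
      + 2*(Real.pi:ℂ)*Complex.I*(cc:ℂ)*(ν:ℂ))) := by
  have hwre := wre_pos M αj hM hαj k hk z hz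
  have hAre : 0 < (4*((M:ℂ)*k*αj*z)).re := by
    have : (4*((M:ℂ)*k*αj*z)).re = 4 * ((M:ℂ)*k*αj*z).re := by
      simp [Complex.mul_re]
    rw [this]; linarith
  have hiA := inv_re_pos hAre
  have him : 0 < (Complex.I * (4*((M:ℂ)*k*αj*z))⁻¹).im := by
    simpa [Complex.mul_im] using hiA
  refine ((summable_jacobiTheta₂_term_iff (cc:ℂ)
    (Complex.I * (4*((M:ℂ)*k*αj*z))⁻¹)).mpr him).congr fun ν => ?_
  rw [jacobiTheta₂_term]
  congr 1
  have e1 : 2*(π:ℂ)*Complex.I*(ν:ℂ)*(cc:ℂ)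
        + (π:ℂ)*Complex.I*(ν:ℂ)^2*(Complex.I * (4*((M:ℂ)*k*αj*z))⁻¹)
      = 2*(π:ℂ)*Complex.I*(cc:ℂ)*(ν:ℂ)
        + Complex.I*Complex.I*((π:ℂ)*(4*((M:ℂ)*k*αj*z))⁻¹*(ν:ℂ)^2) := by ring
  rw [e1, Complex.I_mul_I]
  ring

open Complex Real

lemma step3 (r M αj : ℕ) (hM : 0 < M) (hαj : 0 < αj) (h k : ℤ) (hk : 1 ≤ k)
    (z : ℂ) (hz : 0 < z.re) (ℓ : ℕ) :
    ∑' n : ℤ, thTerm M αj h k z (2*M*(n*k + ℓ) + r)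
      = Complex.exp ((Real.pi:ℂ)*Complex.I*αj*h*((2*M*ℓ+r : ℕ):ℂ)^2/((M:ℂ)*k))
        * (((4*((M:ℂ)*k*αj*z))⁻¹) ^ (1/2 : ℂ)
          * ∑' ν : ℤ, Complex.exp (-(Real.pi:ℂ)*(4*((M:ℂ)*k*αj*z))⁻¹*(ν:ℂ)^2
              + 2*(Real.pi:ℂ)*Complex.I*(Complex.ofReal (((2*M*ℓ+r : ℕ):ℝ)/(2*(M:ℝ)*(k:ℝ))))*(ν:ℂ))) := by
  have hM0 : (M:ℂ) ≠ 0 := Nat.cast_ne_zero.mpr hM.ne'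
  have hk0 : (k:ℂ) ≠ 0 := Int.cast_ne_zero.mpr (by omega)
  have hwre := wre_pos M αj hM hαj k hk z hz
  have hAre : 0 < (4*((M:ℂ)*k*αj*z)).re := by
    have h4 : (4*((M:ℂ)*k*αj*z)).re = 4 * ((M:ℂ)*k*αj*z).re := by simp [Complex.mul_re]
    rw [h4]; linarith
  calc ∑' n : ℤ, thTerm M αj h k z (2*M*(n*k + ℓ) + r)
      = ∑' n : ℤ, Complex.exp ((Real.pi:ℂ)*Complex.I*αj*h*((2*M*ℓ+r : ℕ):ℂ)^2/((M:ℂ)*k))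
          * Complex.exp (-(Real.pi:ℂ)*(4*((M:ℂ)*k*αj*z))
              *((n:ℂ) + (Complex.ofReal (((2*M*ℓ+r : ℕ):ℝ)/(2*(M:ℝ)*(k:ℝ)))))^2) := by
        refine tsum_congr fun n => ?_
        rw [thTerm]
        congr 1
        · -- h-part: periodicity
          have e1 : (Real.pi:ℂ)*Complex.I*αj*h*(((2*M*(n*k + ℓ) + r : ℤ)):ℂ)^2/((M:ℂ)*k)
              = (Real.pi:ℂ)*Complex.I*αj*h*((2*M*ℓ+r : ℕ):ℂ)^2/((M:ℂ)*k)
                + ((2*αj*h*n*((M:ℤ)*k*n + (2*M*ℓ+r : ℕ)) : ℤ):ℂ) * (2*(Real.pi:ℂ)*Complex.I) := by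
            push_cast
            field_simp
            ring
          rw [e1, Complex.exp_add, Complex.exp_int_mul_two_pi_mul_I, mul_one]
        · -- z-part: completing the square
          congr 1
          push_cast
          field_simp
          ring
    _ = Complex.exp ((Real.pi:ℂ)*Complex.I*αj*h*((2*M*ℓ+r : ℕ):ℂ)^2/((M:ℂ)*k))
          * ∑' n : ℤ, Complex.exp (-(Real.pi:ℂ)*(4*((M:ℂ)*k*αj*z))
              *((n:ℂ) + (Complex.ofReal (((2*M*ℓ+r : ℕ):ℝ)/(2*(M:ℝ)*(k:ℝ)))))^2) := tsum_mul_left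
    _ = _ := by rw [poisson_aux hAre (((2*M*ℓ+r : ℕ):ℝ)/(2*(M:ℝ)*(k:ℝ)))]

lemma step5 (r M αj : ℕ) (hM : 0 < M) (hαj : 0 < αj) (h k : ℤ) (hk : 1 ≤ k)
    (z : ℂ) (hz : 0 < z.re) (ν : ℤ) :
    ∑ ℓ : Fin k.toNat,
        Complex.exp ((Real.pi:ℂ)*Complex.I*αj*h*((2*M*(ℓ:ℕ)+r : ℕ):ℂ)^2/((M:ℂ)*k))
          * Complex.exp (-(Real.pi:ℂ)*(4*((M:ℂ)*k*αj*z))⁻¹*(ν:ℂ)^2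
              + 2*(Real.pi:ℂ)*Complex.I*(Complex.ofReal (((2*M*(ℓ:ℕ)+r : ℕ):ℝ)/(2*(M:ℝ)*(k:ℝ))))*(ν:ℂ))
      = Complex.exp ((Real.pi : ℂ) * Complex.I * αj * h * (r : ℂ) ^ 2 / ((M : ℂ) * k))
          * (Complex.exp (-(Real.pi : ℂ) * (ν : ℂ) ^ 2 / (4 * M * k * αj * z)
                + (Real.pi : ℂ) * Complex.I * r * ν / ((M : ℂ) * k))
            * gaussSum' (2 * M * αj * h) (2 * r * αj * h + ν) k) := by
  have hM0 : (M:ℂ) ≠ 0 := Nat.cast_ne_zero.mpr hM.ne'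
  have hk0 : (k:ℂ) ≠ 0 := Int.cast_ne_zero.mpr (by omega)
  have hα0 : (αj:ℂ) ≠ 0 := Nat.cast_ne_zero.mpr hαj.ne'
  have hz0 : z ≠ 0 := by intro hh; rw [hh] at hz; simp at hz
  rw [gaussSum', Finset.mul_sum, Finset.mul_sum,
    Fin.sum_univ_eq_sum_range (fun ℓ : ℕ =>
      Complex.exp ((Real.pi:ℂ)*Complex.I*αj*h*((2*M*ℓ+r : ℕ):ℂ)^2/((M:ℂ)*k))
        * Complex.exp (-(Real.pi:ℂ)*(4*((M:ℂ)*k*αj*z))⁻¹*(ν:ℂ)^2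
            + 2*(Real.pi:ℂ)*Complex.I*(Complex.ofReal (((2*M*ℓ+r : ℕ):ℝ)/(2*(M:ℝ)*(k:ℝ))))*(ν:ℂ)))]
  refine Finset.sum_congr rfl fun ℓ _ => ?_
  rw [← Complex.exp_add, ← Complex.exp_add, ← Complex.exp_add]
  congr 1
  push_cast
  field_simp
  ring


set_option maxHeartbeats 2000000 in
/-- Modular transformation of the theta function: for coprime `h, k` with `k ≥ 1` and
`Re z > 0`,
`θ(r, 2M; 2α_j(h/k + iz/k)) = (e^{πi α_j h r²/(Mk)}/(2√(Mk α_j z)))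
  Σ_{ν ∈ ℤ} e^{-πν²/(4Mk α_j z) + πi r ν/(Mk)} G(2Mα_j h, 2rα_j h + ν; k)`
with the principal branch of the square root. -/
theorem theta_transformation (r M αj : ℕ) (hM : 0 < M) (hr : r ≤ M - 1) (hαj : 0 < αj)
    (h k : ℤ) (hk : 1 ≤ k) (hcop : IsCoprime h k) (z : ℂ) (hz : 0 < z.re) :
    thetaFn r (2 * M) (2 * (αj : ℂ) * ((h : ℂ) / k + Complex.I * z / k))
      = Complex.exp ((Real.pi : ℂ) * Complex.I * αj * h * (r : ℂ) ^ 2 / ((M : ℂ) * k))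
          / (2 * ((M : ℂ) * k * αj * z) ^ (1 / 2 : ℂ))
        * ∑' ν : ℤ,
            Complex.exp (-(Real.pi : ℂ) * (ν : ℂ) ^ 2 / (4 * M * k * αj * z)
                + (Real.pi : ℂ) * Complex.I * r * ν / ((M : ℂ) * k))
              * gaussSum' (2 * M * αj * h) (2 * r * αj * h + ν) k := by
  have hM0 : (M:ℂ) ≠ 0 := Nat.cast_ne_zero.mpr hM.ne'
  have hk0 : (k:ℂ) ≠ 0 := Int.cast_ne_zero.mpr (by omega)
  have hα0 : (αj:ℂ) ≠ 0 := Nat.cast_ne_zero.mpr hαj.ne'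
  have hwre := wre_pos M αj hM hαj k hk z hz
  set K : ℕ := k.toNat with hKdef
  haveI : NeZero K := ⟨by omega⟩
  have hKk : (K:ℤ) = k := Int.toNat_of_nonneg (by omega)
  -- Step 1 : reindex the theta sum over the residue class
  have hinj : Function.Injective (fun t : ℤ => 2*(M:ℤ)*t + r) := by
    intro a b hab
    simp only at hab
    have h2M : (2*(M:ℤ)) ≠ 0 := by
      have : (0:ℤ) < (M:ℤ) := Int.natCast_pos.mpr hM
      linarith
    exact mul_left_cancel₀ h2M (by linarith)
  have step1 : thetaFn r (2*M) (2 * (αj : ℂ) * ((h : ℂ) / k + Complex.I * z / k))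
      = ∑' t : ℤ, thTerm M αj h k z (2*(M:ℤ)*t + r) := by
    rw [thetaFn]
    have hsupp : Function.support (fun ν : ℤ => if ((ν : ZMod (2*M)) = ((r:ℕ) : ZMod (2*M))) then
        Complex.exp (2 * (Real.pi : ℂ) * Complex.I * (2 * (αj : ℂ) * ((h : ℂ) / k
          + Complex.I * z / k)) * (ν : ℂ) ^ 2 / (2 * ((2*M : ℕ):ℂ))) else 0)
        ⊆ Set.range (fun t : ℤ => 2*(M:ℤ)*t + r) := by
      intro ν hν
      by_contra hnot
      apply hν
      have hcond : ¬ ((ν : ZMod (2*M)) = ((r:ℕ) : ZMod (2*M))) := by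
        intro heq
        apply hnot
        have heq' : ((ν : ℤ) : ZMod (2*M)) = (((r:ℕ):ℤ) : ZMod (2*M)) := by
          push_cast; exact_mod_cast heq
        rw [ZMod.intCast_eq_intCast_iff] at heq'
        obtain ⟨t, ht⟩ := (Int.modEq_iff_dvd.mp heq')
        exact ⟨-t, by push_cast at ht ⊢; linarith⟩
      simp only [if_neg hcond]
    rw [← Function.Injective.tsum_eq hinj hsupp]
    refine tsum_congr fun t => ?_
    have hcond : (((2*(M:ℤ)*t + r : ℤ)) : ZMod (2*M)) = ((r:ℕ) : ZMod (2*M)) := by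
      have : (((2*(M:ℤ)*t + r : ℤ)) : ZMod (2*M)) = (((r:ℕ):ℤ) : ZMod (2*M)) := by
        rw [ZMod.intCast_eq_intCast_iff]
        exact Int.modEq_iff_dvd.mpr ⟨-t, by push_cast; ring⟩
      rw [this]; push_cast; ring
    simp only [if_pos hcond]
    rw [thTerm, ← Complex.exp_add]
    congr 1
    have e1 : 2 * (Real.pi : ℂ) * Complex.I * (2 * (αj : ℂ) * ((h : ℂ) / k
          + Complex.I * z / k)) * (((2*(M:ℤ)*t + r : ℤ)):ℂ) ^ 2 / (2 * ((2*M : ℕ):ℂ))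
        = (Real.pi:ℂ)*Complex.I*αj*h*(((2*(M:ℤ)*t + r : ℤ)):ℂ)^2/((M:ℂ)*k)
          + Complex.I*Complex.I*((Real.pi:ℂ)*αj*z*(((2*(M:ℤ)*t + r : ℤ)):ℂ)^2/((M:ℂ)*k)) := by
      push_cast
      field_simp
    rw [e1, Complex.I_mul_I]
    push_cast
    ring
  -- Step 2 : split the sum according to residues mod k
  have hsG : Summable (fun t : ℤ => thTerm M αj h k z (2*(M:ℤ)*t + r)) :=
    (thTerm_summable M αj hM hαj h k hk z hz).comp_injective hinj
  have step2 : ∑' t : ℤ, thTerm M αj h k z (2*(M:ℤ)*t + r)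
      = ∑ ℓ : Fin K, ∑' n : ℤ, thTerm M αj h k z (2*(M:ℤ)*(n*(K:ℤ) + ((ℓ:ℕ):ℤ)) + r) := by
    have he : ∀ p : Fin K × ℤ,
        ((Equiv.prodComm (Fin K) ℤ).trans (Int.divModEquiv K).symm) p
          = p.2 * (K:ℤ) + ((p.1:ℕ):ℤ) := fun p => by
      simp [Int.divModEquiv, Equiv.prodComm]
    calc ∑' t : ℤ, thTerm M αj h k z (2*(M:ℤ)*t + r)
        = ∑' p : Fin K × ℤ, thTerm M αj h k z
            (2*(M:ℤ)*(((Equiv.prodComm (Fin K) ℤ).trans (Int.divModEquiv K).symm) p) + r) :=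
          (((Equiv.prodComm (Fin K) ℤ).trans (Int.divModEquiv K).symm).tsum_eq
            fun t => thTerm M αj h k z (2*(M:ℤ)*t + r)).symm
      _ = ∑' (ℓ : Fin K) (n : ℤ), thTerm M αj h k z
            (2*(M:ℤ)*(((Equiv.prodComm (Fin K) ℤ).trans (Int.divModEquiv K).symm) (ℓ, n)) + r) :=
          Summable.tsum_prod ((((Equiv.prodComm (Fin K) ℤ).trans
            (Int.divModEquiv K).symm).summable_iff).mpr hsG)
      _ = ∑ ℓ : Fin K, ∑' n : ℤ, thTerm M αj h k z (2*(M:ℤ)*(n*(K:ℤ) + ((ℓ:ℕ):ℤ)) + r) := by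
          rw [tsum_fintype]
          exact Finset.sum_congr rfl fun ℓ _ => tsum_congr fun n => by rw [he]
  rw [step1, step2]
  have step3' : ∀ ℓ : Fin K, ∑' n : ℤ, thTerm M αj h k z (2*(M:ℤ)*(n*(K:ℤ) + ((ℓ:ℕ):ℤ)) + r)
      = Complex.exp ((Real.pi:ℂ)*Complex.I*αj*h*((2*M*(ℓ:ℕ)+r : ℕ):ℂ)^2/((M:ℂ)*k))
        * (((4*((M:ℂ)*k*αj*z))⁻¹) ^ (1/2 : ℂ)
          * ∑' ν : ℤ, Complex.exp (-(Real.pi:ℂ)*(4*((M:ℂ)*k*αj*z))⁻¹*(ν:ℂ)^2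
              + 2*(Real.pi:ℂ)*Complex.I
                * (Complex.ofReal (((2*M*(ℓ:ℕ)+r : ℕ):ℝ)/(2*(M:ℝ)*(k:ℝ))))*(ν:ℂ))) := by
    intro ℓ
    simp only [hKk]
    exact step3 r M αj hM hαj h k hk z hz (ℓ:ℕ)
  calc ∑ ℓ : Fin K, ∑' n : ℤ, thTerm M αj h k z (2*(M:ℤ)*(n*(K:ℤ) + ((ℓ:ℕ):ℤ)) + r)
      = ((4*((M:ℂ)*k*αj*z))⁻¹) ^ (1/2 : ℂ) * ∑ ℓ : Fin K, ∑' ν : ℤ,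
          (Complex.exp ((Real.pi:ℂ)*Complex.I*αj*h*((2*M*(ℓ:ℕ)+r : ℕ):ℂ)^2/((M:ℂ)*k))
            * Complex.exp (-(Real.pi:ℂ)*(4*((M:ℂ)*k*αj*z))⁻¹*(ν:ℂ)^2
              + 2*(Real.pi:ℂ)*Complex.I
                * (Complex.ofReal (((2*M*(ℓ:ℕ)+r : ℕ):ℝ)/(2*(M:ℝ)*(k:ℝ))))*(ν:ℂ))) := by
        rw [Finset.mul_sum]
        refine Finset.sum_congr rfl fun ℓ _ => ?_
        rw [step3' ℓ, tsum_mul_left]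
        ring
    _ = ((4*((M:ℂ)*k*αj*z))⁻¹) ^ (1/2 : ℂ) * ∑' ν : ℤ, ∑ ℓ : Fin K,
          (Complex.exp ((Real.pi:ℂ)*Complex.I*αj*h*((2*M*(ℓ:ℕ)+r : ℕ):ℂ)^2/((M:ℂ)*k))
            * Complex.exp (-(Real.pi:ℂ)*(4*((M:ℂ)*k*αj*z))⁻¹*(ν:ℂ)^2
              + 2*(Real.pi:ℂ)*Complex.I
                * (Complex.ofReal (((2*M*(ℓ:ℕ)+r : ℕ):ℝ)/(2*(M:ℝ)*(k:ℝ))))*(ν:ℂ))) := by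
        congr 1
        exact (Summable.tsum_finsetSum (f := fun (ℓ : Fin K) (ν : ℤ) =>
            Complex.exp ((Real.pi:ℂ)*Complex.I*αj*h*((2*M*(ℓ:ℕ)+r : ℕ):ℂ)^2/((M:ℂ)*k))
              * Complex.exp (-(Real.pi:ℂ)*(4*((M:ℂ)*k*αj*z))⁻¹*(ν:ℂ)^2
                + 2*(Real.pi:ℂ)*Complex.I
                  * (Complex.ofReal (((2*M*(ℓ:ℕ)+r : ℕ):ℝ)/(2*(M:ℝ)*(k:ℝ))))*(ν:ℂ)))
          fun ℓ _ =>
          (gauss_summable M αj hM hαj k hk z hz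
            (((2*M*(ℓ:ℕ)+r : ℕ):ℝ)/(2*(M:ℝ)*(k:ℝ)))).mul_left _).symm
    _ = ((4*((M:ℂ)*k*αj*z))⁻¹) ^ (1/2 : ℂ) * ∑' ν : ℤ,
          (Complex.exp ((Real.pi : ℂ) * Complex.I * αj * h * (r : ℂ) ^ 2 / ((M : ℂ) * k))
            * (Complex.exp (-(Real.pi : ℂ) * (ν : ℂ) ^ 2 / (4 * M * k * αj * z)
                  + (Real.pi : ℂ) * Complex.I * r * ν / ((M : ℂ) * k))
              * gaussSum' (2 * M * αj * h) (2 * r * αj * h + ν) k)) := by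
        congr 1
        exact tsum_congr fun ν => step5 r M αj hM hαj h k hk z hz ν
    _ = ((4*((M:ℂ)*k*αj*z))⁻¹) ^ (1/2 : ℂ)
          * (Complex.exp ((Real.pi : ℂ) * Complex.I * αj * h * (r : ℂ) ^ 2 / ((M : ℂ) * k))
            * ∑' ν : ℤ,
              (Complex.exp (-(Real.pi : ℂ) * (ν : ℂ) ^ 2 / (4 * M * k * αj * z)
                  + (Real.pi : ℂ) * Complex.I * r * ν / ((M : ℂ) * k))
                * gaussSum' (2 * M * αj * h) (2 * r * αj * h + ν) k)) := by
        rw [tsum_mul_left]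
    _ = _ := by
        rw [sqrt_four_mul hwre]
        ring
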